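/- arXiv:2212.06881 — 4 statements merged into one kernel-verified Lean document; each statement's English description precedes it below -/
import Mathlib

section
/- Let T : X → X be weakly sequentially continuous and let (T_k) be a sequence of non-expansive maps on X with fixed points a_k. Suppose (a_k) is contained in a bounded set B ⊆ X and that (T_k) converges to T weakly uniformly on B, i.e. for every z ∈ X, sup_{x ∈ B} ⟨T_k(x) − T(x), z⟩ → 0. Then the limit of every weakly convergent subsequence of (a_k) is a fixed point of T. -/
open scoped RealInnerProductSpace

/-- If `T` is weakly sequentially continuous, `T_k` are non-expansive with
fixed points `a_k` contained in a bounded set `B`, and `T_k → T` weakly uniformly on `B`,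
then the limit of every weakly convergent subsequence of `(a_k)` is a fixed point of `T`. -/
theorem weak_subsequential_limits_are_fixed_points
    {X : Type*} [NormedAddCommGroup X] [InnerProductSpace ℝ X] [CompleteSpace X]
    (T : X → X)
    (hT_weak_cont : ∀ (x : ℕ → X) (p : X),
      (∀ z : X, Filter.Tendsto (fun n => ⟪x n, z⟫) Filter.atTop (nhds ⟪p, z⟫)) →
      (∀ z : X, Filter.Tendsto (fun n => ⟪T (x n), z⟫) Filter.atTop (nhds ⟪T p, z⟫)))
    (Tk : ℕ → X → X)
    (hTk_nonexp : ∀ k, ∀ x₁ x₂ : X, ‖Tk k x₁ - Tk k x₂‖ ≤ ‖x₁ - x₂‖)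
    (ak : ℕ → X) (hfix : ∀ k, Tk k (ak k) = ak k)
    (B : Set X) (hB_bounded : Bornology.IsBounded B) (hak_mem : ∀ k, ak k ∈ B)
    (hweak_unif : ∀ z : X, ∀ ε > (0 : ℝ), ∃ N : ℕ, ∀ k ≥ N, ∀ x ∈ B,
      |⟪Tk k x - T x, z⟫| < ε) :
    ∀ (φ : ℕ → ℕ), StrictMono φ → ∀ a : X,
      (∀ z : X, Filter.Tendsto (fun n => ⟪ak (φ n), z⟫) Filter.atTop (nhds ⟪a, z⟫)) →
      T a = a := by
  intro φ hφ a ha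
  have key : ∀ z : X, ⟪a, z⟫ = ⟪T a, z⟫ := by
    intro z
    have h1 : Filter.Tendsto (fun n => ⟪T (ak (φ n)), z⟫) Filter.atTop (nhds ⟪T a, z⟫) :=
      hT_weak_cont (fun n => ak (φ n)) a ha z
    have h2 : Filter.Tendsto (fun n => ⟪Tk (φ n) (ak (φ n)) - T (ak (φ n)), z⟫)
        Filter.atTop (nhds 0) := by
      rw [Metric.tendsto_atTop]
      intro ε hε
      obtain ⟨N, hN⟩ := hweak_unif z ε hε
      exact ⟨N, fun n hn => by
        simpa [Real.dist_eq] using hN (φ n) (le_trans hn (hφ.le_apply)) (ak (φ n)) (hak_mem _)⟩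
    have h3 : Filter.Tendsto (fun n => ⟪ak (φ n), z⟫) Filter.atTop (nhds (0 + ⟪T a, z⟫)) := by
      have := h2.add h1
      convert this using 2 with n
      rw [inner_sub_left, hfix]
      ring
    have := tendsto_nhds_unique (ha z) h3
    simpa using this
  have hz : ⟪a - T a, a - T a⟫ = 0 := by
    rw [inner_sub_left, key]
    ring
  have := inner_self_eq_zero.mp hz
  rw [sub_eq_zero] at this
  exact this.symm
end

section
/- In ℓ²(ℕ), let B be the closed unit ball and C_λ = {x ∈ B : ‖x‖_∞ ≤ λ}. Then for every z ∈ ℓ²(ℕ), sup_{x ∈ C_λ} ⟨x, z⟩ → 0 as λ → 0. -/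
open scoped RealInnerProductSpace

/-- In `ℓ²(ℕ)`, with `C_λ = {x : ‖x‖ ≤ 1, ‖x‖_∞ ≤ λ}`, for every `z` the
supremum `sup_{x ∈ C_λ} ⟪x, z⟫` tends to `0` as `λ → 0`. -/
theorem sup_over_small_ball_tendsto_zero
    (z : lp (fun _ : ℕ => ℝ) 2) :
    ∀ ε > (0 : ℝ), ∃ δ > (0 : ℝ), ∀ lam : ℝ, 0 < lam → lam < δ →
      ∀ x : lp (fun _ : ℕ => ℝ) 2, ‖x‖ ≤ 1 → (∀ i, |x i| ≤ lam) → ⟪x, z⟫ < ε := by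
  intro ε hε
  -- partial sums of singles converge to z
  have hsum := lp.hasSum_single (p := 2) (by norm_num) z
  rw [HasSum, SummationFilter.unconditional_filter, Metric.tendsto_atTop] at hsum
  obtain ⟨s, hs⟩ := hsum (ε / 2) (by linarith)
  have hs' := hs s le_rfl
  rw [dist_eq_norm] at hs'
  set z₁ : lp (fun _ : ℕ => ℝ) 2 := ∑ i ∈ s, lp.single 2 i (z i) with hz₁
  set S : ℝ := ∑ i ∈ s, |z i| with hS
  have hS0 : 0 ≤ S := Finset.sum_nonneg fun i _ => abs_nonneg _
  refine ⟨ε / (2 * (S + 1)), by positivity, ?_⟩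
  intro lam hlam hlamδ x hx hxi
  have key : ⟪x, z⟫ = ⟪x, z₁⟫ + ⟪x, z - z₁⟫ := by
    rw [← inner_add_right, add_sub_cancel]
  have h1 : ⟪x, z₁⟫ ≤ lam * S := by
    rw [hz₁, inner_sum]
    have : ∀ i ∈ s, ⟪x, lp.single 2 i (z i)⟫ ≤ lam * |z i| := by
      intro i _
      rw [lp.inner_single_right]
      calc (⟪x i, z i⟫ : ℝ) = x i * z i := Real.inner_apply _ _
        _ ≤ |x i * z i| := le_abs_self _
        _ = |x i| * |z i| := abs_mul _ _
        _ ≤ lam * |z i| := by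
            exact mul_le_mul_of_nonneg_right (hxi i) (abs_nonneg _)
    calc ∑ i ∈ s, ⟪x, lp.single 2 i (z i)⟫ ≤ ∑ i ∈ s, lam * |z i| :=
          Finset.sum_le_sum this
      _ = lam * S := by rw [hS, Finset.mul_sum]
  have h2 : ⟪x, z - z₁⟫ ≤ ε / 2 := by
    calc ⟪x, z - z₁⟫ ≤ ‖x‖ * ‖z - z₁‖ := real_inner_le_norm _ _
      _ ≤ 1 * (ε / 2) := by
          apply mul_le_mul hx _ (norm_nonneg _) zero_le_one
          rw [← norm_sub_rev] at hs'
          exact hs'.le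
      _ = ε / 2 := one_mul _
  have h3 : lam * S < ε / 2 := by
    calc lam * S ≤ lam * (S + 1) := by nlinarith
      _ < (ε / (2 * (S + 1))) * (S + 1) := by
          apply mul_lt_mul_of_pos_right hlamδ; linarith
      _ = ε / 2 := by field_simp
  rw [key]; linarith
end

section
/- Let A : X → Y be bounded linear, let (x_k) be a sequence in a bounded set B ⊆ X converging weakly to x*, and let H : X → X be weakly sequentially continuous. Suppose (λ_k) are positive reals and Ψ_k : X → X are maps such that (i) Ψ_k(x_k) − x_k ∈ range(A*) ⊆ ker(A)^⊥ for all k, and (ii) for every z ∈ X, sup_{x ∈ B} |⟨(Ψ_k(x) − x)/λ_k − H(x), z⟩| → 0. Then H(x*) ∈ ker(A)^⊥. -/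
open scoped RealInnerProductSpace

/-- If `x_k ⇀ x*` in a bounded set `B`, `H` is weakly sequentially
continuous, `Ψ_k(x_k) - x_k ∈ range(A*) ⊆ ker(A)ᗮ`, and `(Ψ_k - Id)/λ_k → H` weakly
uniformly on `B`, then `H(x*) ∈ ker(A)ᗮ`. -/
theorem limit_in_ker_orthogonal
    {X Y : Type*} [NormedAddCommGroup X] [InnerProductSpace ℝ X] [CompleteSpace X]
    [NormedAddCommGroup Y] [InnerProductSpace ℝ Y] [CompleteSpace Y]
    (A : X →L[ℝ] Y)
    (B : Set X) (hB : Bornology.IsBounded B)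
    (xk : ℕ → X) (hxk_mem : ∀ k, xk k ∈ B)
    (xstar : X)
    (hweak : ∀ z : X, Filter.Tendsto (fun k => ⟪xk k, z⟫) Filter.atTop (nhds ⟪xstar, z⟫))
    (H : X → X)
    (hH_weak_cont : ∀ (u : ℕ → X) (p : X),
      (∀ z : X, Filter.Tendsto (fun n => ⟪u n, z⟫) Filter.atTop (nhds ⟪p, z⟫)) →
      (∀ z : X, Filter.Tendsto (fun n => ⟪H (u n), z⟫) Filter.atTop (nhds ⟪H p, z⟫)))
    (lamk : ℕ → ℝ) (hlamk : ∀ k, 0 < lamk k)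
    (Ψ : ℕ → X → X)
    (hrange : ∀ k, Ψ k (xk k) - xk k ∈ Set.range (A.adjoint))
    (hunif : ∀ z : X, ∀ ε > (0 : ℝ), ∃ N : ℕ, ∀ k ≥ N, ∀ x ∈ B,
      |⟪(lamk k)⁻¹ • (Ψ k x - x) - H x, z⟫| < ε) :
    H xstar ∈ (LinearMap.ker (A : X →ₗ[ℝ] Y))ᗮ := by
  rw [Submodule.mem_orthogonal]
  intro v hv
  rw [LinearMap.mem_ker, ContinuousLinearMap.coe_coe] at hv
  have hperp : ∀ k, ⟪Ψ k (xk k) - xk k, v⟫ = 0 := by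
    intro k
    obtain ⟨y, hy⟩ := hrange k
    rw [← hy, ContinuousLinearMap.adjoint_inner_left, hv, inner_zero_right]
  have h1 : Filter.Tendsto (fun k => ⟪H (xk k), v⟫) Filter.atTop (nhds ⟪H xstar, v⟫) :=
    hH_weak_cont xk xstar hweak v
  have h0 : Filter.Tendsto (fun k => ⟪H (xk k), v⟫) Filter.atTop (nhds 0) := by
    rw [Metric.tendsto_atTop]
    intro ε hε
    obtain ⟨N, hN⟩ := hunif v ε hε
    refine ⟨N, fun k hk => ?_⟩
    have := hN k hk (xk k) (hxk_mem k)
    have hz : ⟪(lamk k)⁻¹ • (Ψ k (xk k) - xk k), v⟫ = 0 := by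
      rw [inner_smul_left, hperp k]; simp
    rw [inner_sub_left, hz, zero_sub] at this
    simpa [Real.dist_eq, abs_neg] using this
  have : ⟪H xstar, v⟫ = 0 := tendsto_nhds_unique h1 h0
  rwa [real_inner_comm]
end

section
/- Let D : X × Y → [0,∞) satisfy: D convex and Fréchet differentiable in x, ∇ₓD (1/β)-Lipschitz in x, and (∇ₓD(x,·))_{x∈X} equicontinuous in y (i.e. y_k → y implies sup_x ‖∇ₓD(x,y_k) − ∇ₓD(x,y)‖ → 0). Let Φ : X → X be a contraction and s ∈ (0, 2β). Then the map y ↦ fix(Φ ∘ (Id − s∇ₓD(·, y))), assigning to y the unique fixed point of the PnP operator, is (strongly) continuous from Y to X. -/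
open RealInnerProductSpace

section Aux
variable {X : Type*} [NormedAddCommGroup X] [InnerProductSpace ℝ X] [CompleteSpace X]

/-- Derivative of a function along a line. -/
lemma line_hasDerivAt (f : X → ℝ) (g : X → X) (hg : ∀ p, HasGradientAt f (g p) p)
    (x v : X) (t : ℝ) :
    HasDerivAt (fun t : ℝ => f (x + t • v)) ⟪g (x + t • v), v⟫ t := by
  have hcurve : HasDerivAt (fun t : ℝ => x + t • v) v t := by
    simpa using ((hasDerivAt_id t).smul_const v).const_add x
  have hf := (hasGradientAt_iff_hasFDerivAt.mp (hg (x + t • v)))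
  have := hf.comp_hasDerivAt t hcurve
  simpa [InnerProductSpace.toDual_apply_apply, Function.comp_def] using this

/-- First-order condition for convexity. -/
lemma convex_grad_ineq (f : X → ℝ) (g : X → X) (hconv : ConvexOn ℝ Set.univ f)
    (hg : ∀ p, HasGradientAt f (g p) p) (x z : X) :
    f x + ⟪g x, z - x⟫ ≤ f z := by
  set v := z - x with hv
  set q : ℝ → ℝ := fun t => f (x + t • v) with hq
  have hqconv : ConvexOn ℝ Set.univ q := by
    have := hconv.comp_affineMap (AffineMap.lineMap x z : ℝ →ᵃ[ℝ] X)
    have he : (fun t : ℝ => f (x + t • v)) = f ∘ (AffineMap.lineMap x z : ℝ →ᵃ[ℝ] X) := by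
      funext t
      simp [hv, AffineMap.lineMap_apply, add_comm]
    rw [hq, he]
    simpa using this
  have hd : HasDerivAt q ⟪g x, v⟫ 0 := by
    have := line_hasDerivAt f g hg x v 0
    simpa using this
  have := hqconv.le_slope_of_hasDerivAt (Set.mem_univ (0:ℝ)) (Set.mem_univ (1:ℝ))
    one_pos hd
  have hq1 : q 1 = f z := by simp [hq, hv]
  have hq0 : q 0 = f x := by simp [hq]
  rw [slope_def_field, hq1, hq0] at this
  norm_num at this
  linarith

end Aux

section Aux2
variable {X : Type*} [NormedAddCommGroup X] [InnerProductSpace ℝ X] [CompleteSpace X]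

/-- Descent lemma for `L`-Lipschitz gradients. -/
lemma descent_lemma (f : X → ℝ) (g : X → X) (hg : ∀ p, HasGradientAt f (g p) p)
    (L : ℝ) (hL : 0 ≤ L) (hlip : ∀ a b, ‖g a - g b‖ ≤ L * ‖a - b‖) (x z : X) :
    f z ≤ f x + ⟪g x, z - x⟫ + L / 2 * ‖z - x‖ ^ 2 := by
  set v := z - x with hv
  set φ : ℝ → ℝ :=
    fun t => f x + t * ⟪g x, v⟫ + L * t ^ 2 / 2 * ‖v‖ ^ 2 - f (x + t • v) with hφ
  have hφd : ∀ t : ℝ, HasDerivAt φ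
      (⟪g x, v⟫ + L * t * ‖v‖ ^ 2 - ⟪g (x + t • v), v⟫) t := by
    intro t
    have h1 := line_hasDerivAt f g hg x v t
    have h2a : HasDerivAt (fun t : ℝ => f x + t * ⟪g x, v⟫) ⟪g x, v⟫ t := by
      simpa using ((hasDerivAt_id t).mul_const ⟪g x, v⟫).const_add (f x)
    have h2b : HasDerivAt (fun t : ℝ => L * t ^ 2 / 2 * ‖v‖ ^ 2) (L * t * ‖v‖ ^ 2) t := by
      have h := (((hasDerivAt_pow 2 t).const_mul L).div_const 2).mul_const (‖v‖ ^ 2)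
      exact h.congr_deriv (by push_cast; ring)
    exact (h2a.add h2b).sub h1
  have mono : MonotoneOn φ (Set.Icc (0:ℝ) 1) := by
    apply monotoneOn_of_deriv_nonneg (convex_Icc (0:ℝ) 1)
    · exact fun t _ => (hφd t).continuousAt.continuousWithinAt
    · exact fun t _ => (hφd t).differentiableAt.differentiableWithinAt
    · intro t ht
      rw [interior_Icc] at ht
      rw [(hφd t).deriv]
      have hib : |⟪g (x + t • v) - g x, v⟫| ≤ L * t * ‖v‖ ^ 2 := by
        calc |⟪g (x + t • v) - g x, v⟫| ≤ ‖g (x + t • v) - g x‖ * ‖v‖ :=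
              abs_real_inner_le_norm _ _
          _ ≤ (L * ‖x + t • v - x‖) * ‖v‖ := by
              gcongr; exact hlip _ _
          _ = L * t * ‖v‖ ^ 2 := by
              rw [add_sub_cancel_left, norm_smul, Real.norm_eq_abs,
                abs_of_pos ht.1]; ring
      have := (abs_le.mp hib).2
      have hsub : ⟪g (x + t • v) - g x, v⟫ = ⟪g (x + t • v), v⟫ - ⟪g x, v⟫ :=
        inner_sub_left _ _ _
      linarith [hsub ▸ this]
  have key := mono (Set.left_mem_Icc.mpr zero_le_one) (Set.right_mem_Icc.mpr zero_le_one)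
    zero_le_one
  have hφ0 : φ 0 = 0 := by simp [hφ]
  have hφ1 : φ 1 = f x + ⟪g x, v⟫ + L / 2 * ‖v‖ ^ 2 - f z := by
    simp [hφ, hv]
  rw [hφ0, hφ1] at key
  linarith

/-- Baillon–Haddad: the gradient of a convex function with `L`-Lipschitz gradient
is `1/L`-cocoercive. -/
lemma cocoercive (f : X → ℝ) (g : X → X) (hconv : ConvexOn ℝ Set.univ f)
    (hg : ∀ p, HasGradientAt f (g p) p)
    (L : ℝ) (hL : 0 < L) (hlip : ∀ a b, ‖g a - g b‖ ≤ L * ‖a - b‖) (x z : X) :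
    (1 / L) * ‖g z - g x‖ ^ 2 ≤ ⟪g z - g x, z - x⟫ := by
  -- lower bound: f z ≥ f x + ⟪g x, z - x⟫ + (1/(2L)) ‖g z - g x‖²
  have lower : ∀ a b : X, f a + ⟪g a, b - a⟫ + 1 / (2 * L) * ‖g b - g a‖ ^ 2 ≤ f b := by
    intro a b
    set d := g b - g a with hd
    set w := b - (1 / L) • d with hw
    have h1 := convex_grad_ineq f g hconv hg a w
    have h2 := descent_lemma f g hg L hL.le hlip b w
    have hwb : w - b = -((1 / L) • d) := by rw [hw]; abel
    have hnorm : ‖w - b‖ ^ 2 = (1 / L) ^ 2 * ‖d‖ ^ 2 := by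
      rw [hwb, norm_neg, norm_smul, Real.norm_eq_abs, abs_of_pos (by positivity), mul_pow]
    have hinner2 : ⟪g b, w - b⟫ = -(1 / L) * ⟪g b, d⟫ := by
      rw [hwb, inner_neg_right, real_inner_smul_right]; ring
    have hinner1 : ⟪g a, w - a⟫ = ⟪g a, b - a⟫ - (1 / L) * ⟪g a, d⟫ := by
      have : w - a = (b - a) - (1 / L) • d := by rw [hw]; abel
      rw [this, inner_sub_right, real_inner_smul_right]
    rw [hnorm, hinner2] at h2
    rw [hinner1] at h1
    have hdd : ⟪g b, d⟫ - ⟪g a, d⟫ = ‖d‖ ^ 2 := by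
      rw [← inner_sub_left, hd, real_inner_self_eq_norm_sq]
    have hLL : L / 2 * ((1 / L) ^ 2 * ‖d‖ ^ 2) = 1 / (2 * L) * ‖d‖ ^ 2 := by
      field_simp
    have e1 : (1 / L) * (⟪g b, d⟫ - ⟪g a, d⟫) = (1 / L) * ‖d‖ ^ 2 := by rw [hdd]
    have e2 : 1 / L = 2 * (1 / (2 * L)) := by field_simp
    nlinarith [h1, h2, hLL, e1, e2]
  have hab := lower x z
  have hba := lower z x
  have hsymm : ⟪g z, x - z⟫ = -⟪g z, z - x⟫ := by
    rw [← inner_neg_right]; congr 1; abel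
  have hnn : ‖g x - g z‖ = ‖g z - g x‖ := norm_sub_rev _ _
  rw [hsymm, hnn] at hba
  have hsum : ⟪g z - g x, z - x⟫ = ⟪g z, z - x⟫ - ⟪g x, z - x⟫ := inner_sub_left _ _ _
  have : 1 / L = 1 / (2 * L) + 1 / (2 * L) := by field_simp; ring
  nlinarith [hab, hba, hsum]

end Aux2

section Aux3
variable {X : Type*} [NormedAddCommGroup X] [InnerProductSpace ℝ X] [CompleteSpace X]

/-- `Id - s • ∇f` is nonexpansive for `s ∈ (0, 2β)`. -/
lemma nonexpansive_grad_step (f : X → ℝ) (g : X → X) (hconv : ConvexOn ℝ Set.univ f)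
    (hg : ∀ p, HasGradientAt f (g p) p) (β : ℝ) (hβ : 0 < β)
    (hlip : ∀ a b, ‖g a - g b‖ ≤ (1 / β) * ‖a - b‖)
    (s : ℝ) (hs : s ∈ Set.Ioo (0 : ℝ) (2 * β)) (a b : X) :
    ‖(a - s • g a) - (b - s • g b)‖ ≤ ‖a - b‖ := by
  have hL : (0:ℝ) < 1 / β := by positivity
  have coco := cocoercive f g hconv hg (1 / β) hL hlip b a
  rw [one_div_one_div] at coco
  set u := a - b with hu
  set d := g a - g b with hd
  have heq : (a - s • g a) - (b - s • g b) = u - s • d := by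
    rw [hu, hd, smul_sub]; abel
  rw [heq]
  have hsq : ‖u - s • d‖ ^ 2 = ‖u‖ ^ 2 - 2 * (s * ⟪u, d⟫) + s ^ 2 * ‖d‖ ^ 2 := by
    rw [norm_sub_sq_real, real_inner_smul_right, norm_smul, Real.norm_eq_abs, mul_pow,
      sq_abs]
  have hsym : ⟪u, d⟫ = ⟪d, u⟫ := real_inner_comm _ _
  have hb : ‖u - s • d‖ ^ 2 ≤ ‖u‖ ^ 2 := by
    rw [hsq, hsym]
    nlinarith [coco, hs.1, hs.2, sq_nonneg ‖d‖, mul_pos hs.1 (sub_pos.mpr hs.2)]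
  nlinarith [norm_nonneg (u - s • d), norm_nonneg u, hb]

end Aux3

/-- Stability of PnP. Under convexity, `(1/β)`-Lipschitz continuity of the
gradient `G = ∇ₓD`, equicontinuity of `(G x ·)_x` in the data, and contractivity of `Φ`,
the map sending data `y` to the unique fixed point of `Φ ∘ (Id - s • G (·) y)` is
(strongly) continuous. -/
theorem pnp_fixed_point_map_continuous
    {X Y : Type*} [NormedAddCommGroup X] [InnerProductSpace ℝ X] [CompleteSpace X]
    [NormedAddCommGroup Y] [InnerProductSpace ℝ Y]
    (D : X → Y → ℝ) (hDnonneg : ∀ x y, 0 ≤ D x y)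
    (G : X → Y → X)
    (hconv : ∀ y, ConvexOn ℝ Set.univ (fun x => D x y))
    (hgrad : ∀ x y, HasGradientAt (fun x => D x y) (G x y) x)
    (β : ℝ) (hβ : 0 < β)
    (hlip : ∀ y x₁ x₂, ‖G x₁ y - G x₂ y‖ ≤ (1 / β) * ‖x₁ - x₂‖)
    (hequi : ∀ y : Y, ∀ ε > (0 : ℝ), ∃ δ > (0 : ℝ), ∀ y' : Y, ‖y' - y‖ < δ →
      ∀ x : X, ‖G x y' - G x y‖ < ε)
    (Φ : X → X) (c : ℝ) (hc_nonneg : 0 ≤ c) (hc_lt_one : c < 1)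
    (hΦ_lip : ∀ x₁ x₂ : X, ‖Φ x₁ - Φ x₂‖ ≤ c * ‖x₁ - x₂‖)
    (s : ℝ) (hs : s ∈ Set.Ioo (0 : ℝ) (2 * β))
    (fixmap : Y → X)
    (hfix : ∀ y : Y, Φ (fixmap y - s • G (fixmap y) y) = fixmap y) :
    Continuous fixmap := by
  rw [Metric.continuous_iff]
  intro b ε hε
  have h1c : (0:ℝ) < 1 - c := by linarith
  have hcs1 : (0:ℝ) < c * s + 1 := by nlinarith [hs.1]
  set ε' : ℝ := (1 - c) * ε / (c * s + 1) with hε'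
  have hε'pos : 0 < ε' := by positivity
  obtain ⟨δ, hδpos, hδ⟩ := hequi b ε' hε'pos
  refine ⟨δ, hδpos, fun y' hy' => ?_⟩
  rw [dist_eq_norm] at hy' ⊢
  set u' := fixmap y' with hu'
  set u := fixmap b with hu
  -- key estimate
  have step1 : ‖u' - u‖ ≤ c * ‖(u' - s • G u' y') - (u - s • G u b)‖ := by
    conv_lhs => rw [hu', hu, ← hfix y', ← hfix b]
    exact hΦ_lip _ _
  have nonexp := nonexpansive_grad_step (fun x => D x y') (fun x => G x y') (hconv y')
    (fun p => hgrad p y') β hβ (hlip y') s hs u' u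
  have hGd : ‖G u y' - G u b‖ ≤ ε' := (hδ y' hy' u).le
  have step2 : ‖(u' - s • G u' y') - (u - s • G u b)‖ ≤ ‖u' - u‖ + s * ε' := by
    have hsplit : (u' - s • G u' y') - (u - s • G u b)
        = ((u' - s • G u' y') - (u - s • G u y')) + (s • G u b - s • G u y') := by abel
    calc ‖(u' - s • G u' y') - (u - s • G u b)‖
        ≤ ‖(u' - s • G u' y') - (u - s • G u y')‖ + ‖s • G u b - s • G u y'‖ := by
          rw [hsplit]; exact norm_add_le _ _
      _ ≤ ‖u' - u‖ + s * ε' := by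
          refine add_le_add nonexp ?_
          rw [← smul_sub, norm_smul, Real.norm_eq_abs, abs_of_pos hs.1, norm_sub_rev]
          exact mul_le_mul_of_nonneg_left hGd hs.1.le
  have key : (1 - c) * ‖u' - u‖ ≤ c * s * ε' := by
    have := step1.trans (by nlinarith [step2, hc_nonneg] :
      c * ‖(u' - s • G u' y') - (u - s • G u b)‖ ≤ c * ‖u' - u‖ + c * s * ε')
    linarith
  -- conclude
  have hfin : ‖u' - u‖ ≤ c * s * ε / (c * s + 1) := by
    have key2 : (1 - c) * ‖u' - u‖ * (c * s + 1) ≤ c * s * ((1 - c) * ε) := by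
      have h := mul_le_mul_of_nonneg_right key hcs1.le
      have hre : c * s * ((1 - c) * ε / (c * s + 1)) * (c * s + 1)
          = c * s * ((1 - c) * ε) := by field_simp
      rw [hε', hre] at h
      exact h
    rw [le_div_iff₀ hcs1]
    nlinarith [key2, h1c]
  calc ‖u' - u‖ ≤ c * s * ε / (c * s + 1) := hfin
    _ < ε := by
        rw [div_lt_iff₀ hcs1]
        nlinarith [hε]
end
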